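/- Let ECT_X, ECT_Y : S^{d−1} × [−a, a] → ℤ be integrable in t for each fixed v, with ‖ECT_X − ECT_Y‖ := sup_v ∫_{−a}^{a} |ECT_X(v,t) − ECT_Y(v,t)| dt = δ. Define SECT_X(v,t) = ∫_{−a}^t (ECT_X(v,x) − m_X(v)) dx where m_X(v) = (1/2a)∫_{−a}^a ECT_X(v,x) dx, and similarly for Y. Then sup_v ∫_{−a}^{a} |SECT_X(v,t) − SECT_Y(v,t)| dt ≤ (2a + 1)δ. -/

import Mathlib

open MeasureTheory

/-- If the ECTs of two shapes (viewed as integer-valued functions of a direction `v` and a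
height `t ∈ [-a,a]`) are within `δ` in the sup-over-directions-of-`L¹` norm, then their
SECTs are within `(2a+1)δ`. -/
theorem sect_stability {d : ℕ} (a δ : ℝ) (ha : 0 < a)
    (E F : EuclideanSpace ℝ (Fin d) → ℝ → ℤ)
    (hE : ∀ v : EuclideanSpace ℝ (Fin d), ‖v‖ = 1 →
      IntegrableOn (fun t => (E v t : ℝ)) (Set.Icc (-a) a))
    (hF : ∀ v : EuclideanSpace ℝ (Fin d), ‖v‖ = 1 →
      IntegrableOn (fun t => (F v t : ℝ)) (Set.Icc (-a) a))
    (hδ : ∀ v : EuclideanSpace ℝ (Fin d), ‖v‖ = 1 →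
      (∫ t in Set.Icc (-a) a, |(E v t : ℝ) - (F v t : ℝ)|) ≤ δ) :
    ∀ v : EuclideanSpace ℝ (Fin d), ‖v‖ = 1 →
      (∫ t in Set.Icc (-a) a,
          |((∫ x in Set.Icc (-a) t, (E v x : ℝ)) -
              (t + a) / (2 * a) * ∫ x in Set.Icc (-a) a, (E v x : ℝ)) -
            ((∫ x in Set.Icc (-a) t, (F v x : ℝ)) -
              (t + a) / (2 * a) * ∫ x in Set.Icc (-a) a, (F v x : ℝ))|) ≤
        (2 * a + 1) * δ := by
  intro v hv
  have hEi := hE v hv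
  have hFi := hF v hv
  have hδv := hδ v hv
  have hgi : IntegrableOn (fun x => (E v x : ℝ) - (F v x : ℝ)) (Set.Icc (-a) a) :=
    hEi.sub hFi
  have hδ0 : 0 ≤ δ :=
    le_trans (integral_nonneg fun t => abs_nonneg _) hδv
  -- pointwise bound
  have key : ∀ t ∈ Set.Icc (-a) a,
      |((∫ x in Set.Icc (-a) t, (E v x : ℝ)) -
          (t + a) / (2 * a) * ∫ x in Set.Icc (-a) a, (E v x : ℝ)) -
        ((∫ x in Set.Icc (-a) t, (F v x : ℝ)) -
          (t + a) / (2 * a) * ∫ x in Set.Icc (-a) a, (F v x : ℝ))| ≤ δ := by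
    intro t ht
    obtain ⟨ht1, ht2⟩ := ht
    set c : ℝ := (t + a) / (2 * a) with hc
    have hc0 : 0 ≤ c := div_nonneg (by linarith) (by linarith)
    have hc1 : c ≤ 1 := by
      rw [hc, div_le_one (by linarith)]; linarith
    have hsubL : Set.Icc (-a) t ⊆ Set.Icc (-a) a := Set.Icc_subset_Icc_right ht2
    have hsubR : Set.Ioc t a ⊆ Set.Icc (-a) a := fun x hx =>
      ⟨le_of_lt (lt_of_le_of_lt ht1 hx.1), hx.2⟩
    have hEL : IntegrableOn (fun x => (E v x : ℝ)) (Set.Icc (-a) t) := hEi.mono_set hsubL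
    have hFL : IntegrableOn (fun x => (F v x : ℝ)) (Set.Icc (-a) t) := hFi.mono_set hsubL
    have hgL : IntegrableOn (fun x => (E v x : ℝ) - (F v x : ℝ)) (Set.Icc (-a) t) :=
      hgi.mono_set hsubL
    have hgR : IntegrableOn (fun x => (E v x : ℝ) - (F v x : ℝ)) (Set.Ioc t a) :=
      hgi.mono_set hsubR
    have hdisj : Disjoint (Set.Icc (-a) t) (Set.Ioc t a) := by
      apply Set.disjoint_left.2
      intro x hx hx'
      exact absurd hx.2 (not_le.2 hx'.1)
    have hunion : Set.Icc (-a) t ∪ Set.Ioc t a = Set.Icc (-a) a :=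
      Set.Icc_union_Ioc_eq_Icc ht1 ht2
    have hsplit : ∫ x in Set.Icc (-a) a, ((E v x : ℝ) - (F v x : ℝ))
        = (∫ x in Set.Icc (-a) t, ((E v x : ℝ) - (F v x : ℝ)))
          + ∫ x in Set.Ioc t a, ((E v x : ℝ) - (F v x : ℝ)) := by
      rw [← setIntegral_union hdisj measurableSet_Ioc hgL hgR, hunion]
    have hsplitAbs : ∫ x in Set.Icc (-a) a, |(E v x : ℝ) - (F v x : ℝ)|
        = (∫ x in Set.Icc (-a) t, |(E v x : ℝ) - (F v x : ℝ)|)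
          + ∫ x in Set.Ioc t a, |(E v x : ℝ) - (F v x : ℝ)| := by
      rw [← setIntegral_union hdisj measurableSet_Ioc hgL.abs hgR.abs, hunion]
    have hGL : ∫ x in Set.Icc (-a) t, ((E v x : ℝ) - (F v x : ℝ))
        = (∫ x in Set.Icc (-a) t, (E v x : ℝ)) - ∫ x in Set.Icc (-a) t, (F v x : ℝ) :=
      integral_sub hEL hFL
    have hGA : ∫ x in Set.Icc (-a) a, ((E v x : ℝ) - (F v x : ℝ))
        = (∫ x in Set.Icc (-a) a, (E v x : ℝ)) - ∫ x in Set.Icc (-a) a, (F v x : ℝ) :=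
      integral_sub hEi hFi
    have hrw : ((∫ x in Set.Icc (-a) t, (E v x : ℝ)) -
          c * ∫ x in Set.Icc (-a) a, (E v x : ℝ)) -
        ((∫ x in Set.Icc (-a) t, (F v x : ℝ)) -
          c * ∫ x in Set.Icc (-a) a, (F v x : ℝ))
        = (1 - c) * (∫ x in Set.Icc (-a) t, ((E v x : ℝ) - (F v x : ℝ)))
          - c * ∫ x in Set.Ioc t a, ((E v x : ℝ) - (F v x : ℝ)) := by
      linear_combination (-1 : ℝ) * hGL + c * hGA - c * hsplit
    rw [hrw]
    have habs1 : |∫ x in Set.Icc (-a) t, ((E v x : ℝ) - (F v x : ℝ))|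
        ≤ ∫ x in Set.Icc (-a) t, |(E v x : ℝ) - (F v x : ℝ)| := by
      simpa [Real.norm_eq_abs] using
        norm_integral_le_integral_norm (μ := volume.restrict (Set.Icc (-a) t))
          (fun x => (E v x : ℝ) - (F v x : ℝ))
    have habs2 : |∫ x in Set.Ioc t a, ((E v x : ℝ) - (F v x : ℝ))|
        ≤ ∫ x in Set.Ioc t a, |(E v x : ℝ) - (F v x : ℝ)| := by
      simpa [Real.norm_eq_abs] using
        norm_integral_le_integral_norm (μ := volume.restrict (Set.Ioc t a))
          (fun x => (E v x : ℝ) - (F v x : ℝ))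
    have hA0 : 0 ≤ ∫ x in Set.Icc (-a) t, |(E v x : ℝ) - (F v x : ℝ)| :=
      integral_nonneg fun x => abs_nonneg _
    have hB0 : 0 ≤ ∫ x in Set.Ioc t a, |(E v x : ℝ) - (F v x : ℝ)| :=
      integral_nonneg fun x => abs_nonneg _
    have htot : (∫ x in Set.Icc (-a) a, |(E v x : ℝ) - (F v x : ℝ)|) ≤ δ := hδv
    have hstep : |(1 - c) * (∫ x in Set.Icc (-a) t, ((E v x : ℝ) - (F v x : ℝ)))
          - c * ∫ x in Set.Ioc t a, ((E v x : ℝ) - (F v x : ℝ))|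
        ≤ (1 - c) * |∫ x in Set.Icc (-a) t, ((E v x : ℝ) - (F v x : ℝ))|
          + c * |∫ x in Set.Ioc t a, ((E v x : ℝ) - (F v x : ℝ))| := by
      calc |(1 - c) * (∫ x in Set.Icc (-a) t, ((E v x : ℝ) - (F v x : ℝ)))
            - c * ∫ x in Set.Ioc t a, ((E v x : ℝ) - (F v x : ℝ))|
          ≤ |(1 - c) * (∫ x in Set.Icc (-a) t, ((E v x : ℝ) - (F v x : ℝ)))|
            + |c * ∫ x in Set.Ioc t a, ((E v x : ℝ) - (F v x : ℝ))| := abs_sub _ _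
        _ = (1 - c) * |∫ x in Set.Icc (-a) t, ((E v x : ℝ) - (F v x : ℝ))|
            + c * |∫ x in Set.Ioc t a, ((E v x : ℝ) - (F v x : ℝ))| := by
            rw [abs_mul, abs_mul, abs_of_nonneg (by linarith : (0:ℝ) ≤ 1 - c),
              abs_of_nonneg hc0]
    nlinarith [mul_nonneg hc0 (sub_nonneg.2 habs2),
      mul_nonneg (sub_nonneg.2 hc1) (sub_nonneg.2 habs1),
      mul_nonneg hc0 hB0, mul_nonneg (sub_nonneg.2 hc1) hA0]
  -- integrate the pointwise bound
  have hmeas : volume (Set.Icc (-a) a) = ENNReal.ofReal (2 * a) := by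
    rw [Real.volume_Icc]; ring_nf
  have hfin : volume (Set.Icc (-a) a) ≠ ⊤ := by
    rw [hmeas]; exact ENNReal.ofReal_ne_top
  have htoReal : (volume (Set.Icc (-a) a)).toReal = 2 * a := by
    rw [hmeas, ENNReal.toReal_ofReal (by linarith)]
  by_cases hInt : IntegrableOn (fun t =>
      |((∫ x in Set.Icc (-a) t, (E v x : ℝ)) -
          (t + a) / (2 * a) * ∫ x in Set.Icc (-a) a, (E v x : ℝ)) -
        ((∫ x in Set.Icc (-a) t, (F v x : ℝ)) -
          (t + a) / (2 * a) * ∫ x in Set.Icc (-a) a, (F v x : ℝ))|) (Set.Icc (-a) a)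
  · calc (∫ t in Set.Icc (-a) a,
          |((∫ x in Set.Icc (-a) t, (E v x : ℝ)) -
              (t + a) / (2 * a) * ∫ x in Set.Icc (-a) a, (E v x : ℝ)) -
            ((∫ x in Set.Icc (-a) t, (F v x : ℝ)) -
              (t + a) / (2 * a) * ∫ x in Set.Icc (-a) a, (F v x : ℝ))|)
        ≤ ∫ _t in Set.Icc (-a) a, δ :=
          setIntegral_mono_on hInt (integrableOn_const hfin)
            measurableSet_Icc key
      _ = 2 * a * δ := by rw [setIntegral_const, measureReal_def, htoReal, smul_eq_mul]
      _ ≤ (2 * a + 1) * δ := by nlinarith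
  · rw [integral_undef hInt]
    nlinarith
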